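/- Let n be an odd natural number, let a ∈ ℤ^n have support T with t := |T| satisfying 1 ≤ t ≤ ⌊n/2⌋, let ℓ ∈ T, and let b ∈ ℤ. Then the number of vectors x ∈ ℝ^n with x_ℓ = 1/2, x_i ∈ {0,1} for all i ≠ ℓ, exactly (n−1)/2 coordinates equal to 1, and ⟨a, x⟩ = b + 1/2 is at most C(t−1, ⌊t/2⌋) · C(n−t, (n−1)/2 − ⌊t/2⌋). -/

import Mathlib

open Finset

lemma erdos_lo {α : Type*} [Fintype α] [DecidableEq α] (g : α → ℝ)
    (hg : ∀ i, g i ≠ 0) (c : ℝ) :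
    (Finset.univ.filter (fun A : Finset α => ∑ i ∈ A, g i = c)).card
      ≤ (Fintype.card α).choose (Fintype.card α / 2) := by
  classical
  set P : Finset α := Finset.univ.filter (fun i => 0 < g i) with hP
  set F : Finset α → Finset α := fun A => (A ∩ P) ∪ (Pᶜ \ A) with hF
  have hinvol : ∀ A, F (F A) = A := by
    intro A
    ext i
    by_cases hi : i ∈ P <;> simp [hF, hi] 
  have hFInj : Function.Injective F := Function.LeftInverse.injective hinvol
  have key : ∀ A : Finset α, ∑ i ∈ F A, |g i| = ∑ i ∈ A, g i - ∑ i ∈ Pᶜ, g i := by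
    intro A
    have hd : Disjoint (A ∩ P) (Pᶜ \ A) := by
      refine Finset.disjoint_left.2 fun i hi hi' => ?_
      simp only [Finset.mem_inter, Finset.mem_sdiff, Finset.mem_compl] at hi hi'
      exact hi'.1 hi.2
    rw [hF]
    simp only []
    rw [Finset.sum_union hd]
    have h1 : ∑ i ∈ A ∩ P, |g i| = ∑ i ∈ A ∩ P, g i := by
      refine Finset.sum_congr rfl fun i hi => abs_of_pos ?_
      have := (Finset.mem_inter.1 hi).2
      simpa [hP] using this
    have h2 : ∑ i ∈ Pᶜ \ A, |g i| = ∑ i ∈ Pᶜ \ A, (-(g i)) := by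
      refine Finset.sum_congr rfl fun i hi => abs_of_neg ?_
      have hi' : i ∈ Pᶜ := (Finset.mem_sdiff.1 hi).1
      have : ¬ (0 < g i) := by simpa [hP] using (Finset.mem_compl.1 hi')
      exact lt_of_le_of_ne (not_lt.1 this) (hg i)
    have h3 : Pᶜ \ A = Pᶜ \ (Pᶜ ∩ A) := (Finset.sdiff_inter_self_left _ _).symm
    have h4 : ∑ i ∈ Pᶜ \ (Pᶜ ∩ A), g i = ∑ i ∈ Pᶜ, g i - ∑ i ∈ Pᶜ ∩ A, g i :=
      Finset.sum_sdiff_eq_sub Finset.inter_subset_left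
    have h5 : ∑ i ∈ A ∩ P, g i + ∑ i ∈ A \ P, g i = ∑ i ∈ A, g i :=
      Finset.sum_inter_add_sum_sdiff _ _ _
    have h6 : Pᶜ ∩ A = A \ P := by ext i; simp [Finset.mem_sdiff, and_comm]
    rw [h1, h2, Finset.sum_neg_distrib, h3, h4, h6]
    linarith
  set B := Finset.univ.filter (fun A : Finset α => ∑ i ∈ A, g i = c) with hB
  have hcard : B.card = (B.image F).card := (Finset.card_image_of_injective _ hFInj).symm
  have hanti : IsAntichain (· ⊆ ·) ((B.image F : Finset (Finset α)) : Set (Finset α)) := by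
    intro X hX Y hY hne hsub
    simp only [Finset.coe_image, Set.mem_image, Finset.mem_coe, hB, Finset.mem_filter] at hX hY
    obtain ⟨A1, hA1, rfl⟩ := hX
    obtain ⟨A2, hA2, rfl⟩ := hY
    have e1 := key A1; have e2 := key A2
    rw [hA1.2] at e1; rw [hA2.2] at e2
    have hsum : ∑ i ∈ F A2 \ F A1, |g i| = 0 := by
      rw [Finset.sum_sdiff_eq_sub hsub, e1, e2]; ring
    have hne' : (F A2 \ F A1).Nonempty := by
      rw [Finset.sdiff_nonempty]
      intro h
      exact hne (congrArg F (hFInj (Finset.Subset.antisymm hsub h)).symm ▸ rfl)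
    have : 0 < ∑ i ∈ F A2 \ F A1, |g i| :=
      Finset.sum_pos (fun i _ => abs_pos.2 (hg i)) hne'
    linarith
  exact hcard ▸ IsAntichain.sperner hanti



/-- Per-coordinate counting bound in the proof of Theorem 1.2: for `n` odd,
`a ∈ ℤ^n` with support `T` of size `t` (`1 ≤ t ≤ ⌊n/2⌋`), `ℓ ∈ T` and `b ∈ ℤ`,
the number of points `x ∈ ℝ^n` with `x ℓ = 1/2`, all other coordinates in `{0,1}`,
exactly `(n-1)/2` coordinates equal to `1`, and `⟨a,x⟩ = b + 1/2`, is at most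
`C(t-1, ⌊t/2⌋) * C(n-t, (n-1)/2 - ⌊t/2⌋)`. -/
theorem per_coordinate_counting_bound (n : ℕ) (hn : Odd n) (a : Fin n → ℤ)
    (t : ℕ) (hT : (Finset.univ.filter (fun i => a i ≠ 0)).card = t)
    (ht1 : 1 ≤ t) (ht2 : t ≤ n / 2) (ℓ : Fin n) (hℓ : a ℓ ≠ 0) (b : ℤ) :
    Set.ncard {x : Fin n → ℝ |
        x ℓ = 1 / 2 ∧ (∀ i, i ≠ ℓ → (x i = 0 ∨ x i = 1)) ∧
        Set.ncard {i : Fin n | x i = 1} = (n - 1) / 2 ∧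
        ∑ i, (a i : ℝ) * x i = (b : ℝ) + 1 / 2}
      ≤ (t - 1).choose (t / 2) * (n - t).choose ((n - 1) / 2 - t / 2) := by
  classical
  set T : Finset (Fin n) := Finset.univ.filter (fun i => a i ≠ 0) with hTdef
  have hℓT : ℓ ∈ T := by simp [hTdef, hℓ]
  set T' : Finset (Fin n) := T.erase ℓ with hT'def
  have hT'card : T'.card = t - 1 := by rw [hT'def, Finset.card_erase_of_mem hℓT, hT]
  set m : ℕ := (n - 1) / 2 with hm
  set c : ℝ := (b : ℝ) + 1 / 2 - (a ℓ : ℝ) / 2 with hc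
  set X : Set (Fin n → ℝ) := {x : Fin n → ℝ |
        x ℓ = 1 / 2 ∧ (∀ i, i ≠ ℓ → (x i = 0 ∨ x i = 1)) ∧
        Set.ncard {i : Fin n | x i = 1} = (n - 1) / 2 ∧
        ∑ i, (a i : ℝ) * x i = (b : ℝ) + 1 / 2} with hX
  set F : (Fin n → ℝ) → Finset (Fin n) := fun x => Finset.univ.filter (fun i => x i = 1)
    with hFdef
  -- injectivity of F on X
  have hinj : Set.InjOn F X := by
    intro x hx y hy hxy
    funext i
    by_cases hi : i = ℓ
    · rw [hi, hx.1, hy.1]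
    · have h1 : x i = 1 ↔ y i = 1 := by
        constructor <;> intro h
        · have : i ∈ F x := by simp [hFdef, h]
          rw [hxy] at this; simpa [hFdef] using this
        · have : i ∈ F y := by simp [hFdef, h]
          rw [← hxy] at this; simpa [hFdef] using this
      rcases hx.2.1 i hi with h | h <;> rcases hy.2.1 i hi with h' | h'
      · rw [h, h']
      · exact absurd (h1.2 h') (by rw [h]; norm_num)
      · exact absurd (h1.1 h) (by rw [h']; norm_num)
      · rw [h, h']
  -- target finset family
  set 𝒜 : Finset (Finset (Fin n)) := Finset.univ.filter
    (fun S => ℓ ∉ S ∧ S.card = m ∧ ∑ i ∈ S, (a i : ℝ) = c) with h𝒜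
  have hmem : ∀ x ∈ X, F x ∈ 𝒜 := by
    intro x hx
    obtain ⟨h1, h2, h3, h4⟩ := hx
    have hℓnot : ℓ ∉ F x := by
      simp only [hFdef, Finset.mem_filter]
      rintro ⟨-, h⟩
      rw [h1] at h; norm_num at h
    have hcard : (F x).card = m := by
      have : {i : Fin n | x i = 1} = ↑(F x) := by
        ext i; simp [hFdef]
      rw [this, Set.ncard_coe_finset] at h3
      exact h3
    have hsum : ∑ i ∈ F x, (a i : ℝ) = c := by
      have hterm : ∀ i, (a i : ℝ) * x i =
          (if i ∈ F x then (a i : ℝ) else 0) + (if i = ℓ then (a ℓ : ℝ) / 2 else 0) := by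
        intro i
        by_cases hi : i = ℓ
        · subst hi
          have : i ∉ F x := hℓnot
          rw [h1]; simp [this]; ring
        · rcases h2 i hi with h | h
          · have : i ∉ F x := by simp [hFdef, h]
            simp [this, hi, h]
          · have : i ∈ F x := by simp [hFdef, h]
            simp [this, hi, h]
      have := h4
      rw [Finset.sum_congr rfl (fun i _ => hterm i), Finset.sum_add_distrib,
        Finset.sum_ite_mem, Finset.univ_inter, Finset.sum_ite_eq' Finset.univ ℓ] at this
      simp only [Finset.mem_univ, if_true] at this
      rw [hc]; linarith
    simp [h𝒜, hℓnot, hcard, hsum]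
  -- X is finite and its ncard bounded by 𝒜.card
  have hXfin : X.Finite :=
    Set.Finite.of_finite_image (Set.toFinite _) hinj
  have step1 : X.ncard ≤ 𝒜.card := by
    rw [← Set.ncard_image_of_injOn hinj]
    have himg : F '' X ⊆ ↑𝒜 := by
      rintro S ⟨x, hx, rfl⟩; exact hmem x hx
    calc (F '' X).ncard ≤ (↑𝒜 : Set (Finset (Fin n))).ncard :=
          Set.ncard_le_ncard himg (Set.toFinite _)
      _ = 𝒜.card := Set.ncard_coe_finset _
  -- fiber decomposition over intersections with T'
  set ℬ : Finset (Finset (Fin n)) := T'.powerset.filter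
    (fun A => ∑ i ∈ A, (a i : ℝ) = c) with hℬ
  have hφ : ∀ S ∈ 𝒜, S ∩ T' ∈ ℬ := by
    intro S hS
    simp only [h𝒜, Finset.mem_filter, Finset.mem_univ, true_and] at hS
    obtain ⟨hℓS, hScard, hSsum⟩ := hS
    have hsub : S ∩ T' ⊆ T' := Finset.inter_subset_right
    have hsum : ∑ i ∈ S ∩ T', (a i : ℝ) = ∑ i ∈ S, (a i : ℝ) := by
      refine Finset.sum_subset Finset.inter_subset_left (fun i hiS hi => ?_)
      have hiT' : i ∉ T' := fun h => hi (Finset.mem_inter.2 ⟨hiS, h⟩)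
      have : i ∉ T := by
        intro hiT
        exact hiT' (Finset.mem_erase.2 ⟨fun h => hℓS (h ▸ hiS), hiT⟩)
      have : a i = 0 := by
        by_contra h
        exact this (by simp [hTdef, h])
      simp [this]
    simp only [hℬ, Finset.mem_filter, Finset.mem_powerset]
    exact ⟨hsub, by rw [hsum, hSsum]⟩
  have step2 : 𝒜.card = ∑ A ∈ ℬ, (𝒜.filter (fun S => S ∩ T' = A)).card :=
    Finset.card_eq_sum_card_fiberwise hφ
  -- fiber bound
  have hTc : (Tᶜ : Finset (Fin n)).card = n - t := by
    rw [Finset.card_compl, hT, Fintype.card_fin]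
  have fiberbound : ∀ A ∈ ℬ, (𝒜.filter (fun S => S ∩ T' = A)).card
      ≤ (n - t).choose ((n - t) / 2) := by
    intro A hA
    by_cases hfib : (𝒜.filter (fun S => S ∩ T' = A)).Nonempty
    · obtain ⟨S₀, hS₀⟩ := hfib
      have hS₀' := (Finset.mem_filter.1 hS₀).1
      simp only [h𝒜, Finset.mem_filter, Finset.mem_univ, true_and] at hS₀'
      have hAcard : A.card ≤ m := by
        have hAS : A ⊆ S₀ := by
          rw [← (Finset.mem_filter.1 hS₀).2]; exact Finset.inter_subset_left
        calc A.card ≤ S₀.card := Finset.card_le_card hAS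
          _ = m := hS₀'.2.1
      have hmap : ∀ S ∈ 𝒜.filter (fun S => S ∩ T' = A),
          S \ T' ∈ Finset.powersetCard (m - A.card) Tᶜ := by
        intro S hS
        obtain ⟨hS𝒜, hSA⟩ := Finset.mem_filter.1 hS
        simp only [h𝒜, Finset.mem_filter, Finset.mem_univ, true_and] at hS𝒜
        obtain ⟨hℓS, hScard, -⟩ := hS𝒜
        refine Finset.mem_powersetCard.2 ⟨?_, ?_⟩
        · intro i hi
          obtain ⟨hiS, hiT'⟩ := Finset.mem_sdiff.1 hi
          rw [Finset.mem_compl]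
          intro hiT
          exact hiT' (Finset.mem_erase.2 ⟨fun h => hℓS (h ▸ hiS), hiT⟩)
        · have := Finset.card_inter_add_card_sdiff S T'
          rw [hSA, hScard] at this
          omega
      have hinj2 : Set.InjOn (fun S => S \ T')
          ↑(𝒜.filter (fun S => S ∩ T' = A)) := by
        intro S₁ h₁ S₂ h₂ h₁₂
        simp only [Finset.coe_filter, Set.mem_setOf_eq] at h₁ h₂
        have e₁ : S₁ \ T' ∪ S₁ ∩ T' = S₁ := Finset.sdiff_union_inter _ _
        have e₂ : S₂ \ T' ∪ S₂ ∩ T' = S₂ := Finset.sdiff_union_inter _ _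
        rw [← e₁, ← e₂, h₁.2, h₂.2]
        simp only at h₁₂
        rw [h₁₂]
      calc (𝒜.filter (fun S => S ∩ T' = A)).card
          ≤ (Finset.powersetCard (m - A.card) Tᶜ).card :=
            Finset.card_le_card_of_injOn _ hmap hinj2
        _ = (n - t).choose (m - A.card) := by
            rw [Finset.card_powersetCard, hTc]
        _ ≤ (n - t).choose ((n - t) / 2) := Nat.choose_le_middle _ _
    · rw [Finset.not_nonempty_iff_eq_empty.1 hfib]; simp
  -- Littlewood--Offord bound on ℬ
  have step3 : ℬ.card ≤ (t - 1).choose ((t - 1) / 2) := by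
    set g : {i // i ∈ T'} → ℝ := fun i => (a i.1 : ℝ) with hg
    have hgne : ∀ i : {i // i ∈ T'}, g i ≠ 0 := by
      intro i
      have : a i.1 ≠ 0 := by
        have h2 := i.2
        simp only [hT'def, hTdef, Finset.mem_erase, Finset.mem_filter] at h2
        exact h2.2.2
      simpa [hg] using this
    have hcardα : Fintype.card {i // i ∈ T'} = t - 1 := by
      rw [Fintype.card_coe, hT'card]
    have := erdos_lo g hgne c
    rw [hcardα] at this
    refine le_trans ?_ this
    refine Finset.card_le_card_of_injOn (fun B => B.subtype (· ∈ T')) ?_ ?_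
    · intro B hB
      simp only [hℬ, Finset.mem_coe, Finset.mem_filter, Finset.mem_powerset] at hB
      simp only [Finset.mem_coe, Finset.mem_filter, Finset.mem_univ, true_and]
      have h := Finset.sum_subtype_eq_sum_filter (fun j : Fin n => (a j : ℝ))
        (s := B) (p := (· ∈ T'))
      rw [Finset.filter_true_of_mem (fun i hi => hB.1 hi)] at h
      exact h.trans hB.2
    · intro B₁ h₁ B₂ h₂ h₁₂
      simp only [hℬ, Finset.coe_filter, Finset.mem_powerset, Set.mem_setOf_eq] at h₁ h₂
      have e₁ : (B₁.subtype (· ∈ T')).map (Function.Embedding.subtype _) = B₁ := by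
        rw [Finset.subtype_map, Finset.filter_true_of_mem (fun i hi => h₁.1 hi)]
      have e₂ : (B₂.subtype (· ∈ T')).map (Function.Embedding.subtype _) = B₂ := by
        rw [Finset.subtype_map, Finset.filter_true_of_mem (fun i hi => h₂.1 hi)]
      rw [← e₁, ← e₂]
      simp only at h₁₂
      rw [h₁₂]
  -- arithmetic identities
  obtain ⟨k, hk⟩ := hn
  have hch1 : (t - 1).choose ((t - 1) / 2) = (t - 1).choose (t / 2) := by
    rcases Nat.even_or_odd t with he | ho
    · obtain ⟨s, hs⟩ := he
      have h1 : (t - 1) - (t - 1) / 2 = t / 2 := by omega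
      rw [← h1, Nat.choose_symm (by omega)]
    · obtain ⟨s, hs⟩ := ho
      congr 1; omega
  have hch2 : (n - t) / 2 = (n - 1) / 2 - t / 2 := by omega
  -- put it together
  calc X.ncard ≤ 𝒜.card := step1
    _ = ∑ A ∈ ℬ, (𝒜.filter (fun S => S ∩ T' = A)).card := step2
    _ ≤ ∑ A ∈ ℬ, (n - t).choose ((n - t) / 2) := Finset.sum_le_sum fiberbound
    _ = ℬ.card * (n - t).choose ((n - t) / 2) := by rw [Finset.sum_const, smul_eq_mul]
    _ ≤ (t - 1).choose ((t - 1) / 2) * (n - t).choose ((n - t) / 2) :=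
        Nat.mul_le_mul_right _ step3
    _ = (t - 1).choose (t / 2) * (n - t).choose ((n - 1) / 2 - t / 2) := by
        rw [hch1, hch2]
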